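/- A free product of locally indicable groups is locally indicable. (Two-factor case: if A and B are locally indicable, then A * B is locally indicable.) -/

import Mathlib

/-- A group is locally indicable if every nontrivial finitely generated subgroup
surjects onto `ℤ`. -/
def LocallyIndicable (G : Type*) [Group G] : Prop :=
  ∀ K : Subgroup G, K ≠ ⊥ → K.FG →
    ∃ f : K →* Multiplicative ℤ, Function.Surjective f

namespace LocIndAux

open Function Monoid Monoid.CoprodI

universe u v

section General

variable {G : Type*} {H : Type*} [Group G] [Group H]

lemma freeGroup_eq_one_of_isEmpty {α : Type*} [IsEmpty α] (x : FreeGroup α) : x = 1 := by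
  refine FreeGroup.induction_on x rfl (fun a => isEmptyElim a) (fun a _ => isEmptyElim a)
    (fun x y hx hy => by rw [hx, hy, one_mul])

lemma surjective_of_ofAdd_one_mem (f : G →* Multiplicative ℤ)
    (h : Multiplicative.ofAdd (1 : ℤ) ∈ f.range) : Surjective f := by
  obtain ⟨x, hx⟩ := h
  intro z
  refine ⟨x ^ (Multiplicative.toAdd z), ?_⟩
  rw [map_zpow, hx, ← ofAdd_zsmul, smul_eq_mul, mul_one, ofAdd_toAdd]

lemma exists_surj_of_free (H : Type*) [Group H] [IsFreeGroup H] [Nontrivial H] :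
    ∃ f : H →* Multiplicative ℤ, Surjective f := by
  rcases isEmpty_or_nonempty (IsFreeGroup.Generators H) with he | hne
  · exfalso
    obtain ⟨x, y, hxy⟩ := exists_pair_ne H
    apply hxy
    have e := IsFreeGroup.toFreeGroup H
    have h1 : ∀ g : H, g = 1 := fun g => by
      have h2 := freeGroup_eq_one_of_isEmpty (e g)
      have h3 := congrArg e.symm h2
      simpa using h3
    rw [h1 x, h1 y]
  · obtain ⟨x0⟩ := hne
    refine ⟨IsFreeGroup.lift (fun _ => Multiplicative.ofAdd (1 : ℤ)), ?_⟩
    exact surjective_of_ofAdd_one_mem _ ⟨IsFreeGroup.of x0, IsFreeGroup.lift_of _ _⟩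

lemma aux_fg_map {K : Subgroup G} (h : K.FG) (f : G →* H) : (K.map f).FG := by
  classical
  obtain ⟨S, hS⟩ := h
  exact ⟨S.image f, by rw [Finset.coe_image, ← MonoidHom.map_closure, hS]⟩

lemma locallyIndicable_of_mulEquiv (e : G ≃* H) (hG : LocallyIndicable G) :
    LocallyIndicable H := by
  intro K hKbot hKfg
  have h1 : (K.map e.symm.toMonoidHom) ≠ ⊥ := by
    intro h
    exact hKbot ((Subgroup.map_eq_bot_iff_of_injective K e.symm.injective).mp h)
  obtain ⟨f, hf⟩ := hG _ h1 (aux_fg_map hKfg _)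
  let e' := Subgroup.equivMapOfInjective K e.symm.toMonoidHom e.symm.injective
  exact ⟨f.comp e'.toMonoidHom, hf.comp e'.surjective⟩

lemma freegroup_unique_rep {α : Type*} [Unique α] (x : FreeGroup α) :
    x = FreeGroup.of (default : α) ^
      (Multiplicative.toAdd ((FreeGroup.lift fun _ : α => Multiplicative.ofAdd (1 : ℤ)) x)) := by
  refine FreeGroup.induction_on x (by simp) (fun a => ?_) (fun a _ => ?_) (fun x y hx hy => ?_)
  · have h : (pure a : FreeGroup α) = FreeGroup.of (default : α) := by
      rw [Unique.eq_default a]; rfl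
    rw [show FreeGroup.of a = FreeGroup.of (default : α) from h, FreeGroup.lift_apply_of]
    simp
  · have h : (pure a : FreeGroup α) = FreeGroup.of (default : α) := by
      rw [Unique.eq_default a]; rfl
    rw [show FreeGroup.of a = FreeGroup.of (default : α) from h, map_inv, FreeGroup.lift_apply_of]
    simp
  · rw [map_mul, toAdd_mul, zpow_add, ← hx, ← hy]

end General

section Words

variable {M : Bool → Type u} [∀ i, Group (M i)]

section DecEq

variable [∀ i, DecidableEq (M i)]

lemma toList_of_smul {i : Bool} {g : M i} (hg : g ≠ 1) (w : Word M)
    (hw : w.fstIdx ≠ some i) :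
    (CoprodI.of g • w).toList = ⟨i, g⟩ :: w.toList := by
  rw [← Word.cons_eq_smul (h1 := hw) (h2 := hg)]
  rfl

lemma exists_decomp {i : Bool} {h : M i} {t : List (Σ i, M i)} (w : Word M)
    (hw : w.toList = ⟨i, h⟩ :: t) :
    ∃ w' : Word M, w'.toList = t ∧ w'.fstIdx ≠ some i ∧ h ≠ 1 ∧ w = CoprodI.of h • w' := by
  induction w using Word.consRecOn with
  | empty => simp [Word.empty] at hw
  | cons j m w' h1 h2 _ =>
    simp only [Word.cons] at hw
    obtain ⟨hjm, ht⟩ := List.cons_eq_cons.mp hw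
    obtain ⟨rfl, hmh⟩ := Sigma.mk.inj_iff.mp hjm
    have hmh' : m = h := eq_of_heq hmh
    subst hmh'
    exact ⟨w', ht, h1, h2, Word.cons_eq_smul⟩

lemma toList_of_smul_merge {i : Bool} {g h : M i} {t : List (Σ i, M i)} (w : Word M)
    (hw : w.toList = ⟨i, h⟩ :: t) (hgh : g * h ≠ 1) :
    (CoprodI.of g • w).toList = ⟨i, g * h⟩ :: t := by
  obtain ⟨w', ht, hfst, _, rfl⟩ := exists_decomp w hw
  rw [← mul_smul, ← map_mul, toList_of_smul hgh _ hfst, ht]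

lemma toList_of_smul_cancel {i : Bool} {g h : M i} {t : List (Σ i, M i)} (w : Word M)
    (hw : w.toList = ⟨i, h⟩ :: t) (hgh : g * h = 1) :
    (CoprodI.of g • w).toList = t := by
  obtain ⟨w', ht, hfst, _, rfl⟩ := exists_decomp w hw
  rw [← mul_smul, ← map_mul, hgh, map_one, one_smul, ht]

end DecEq

/-- Words whose reduced form starts with the letters `a` (from `M true`) then `b`. -/
def Xs (a : M true) (b : M false) : Set (Word M) :=
  {w | w.toList.take 2 = [⟨true, a⟩, ⟨false, b⟩]}

/-- Words whose reduced form starts with the letters `b` (from `M false`) then `a`. -/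
def Ys (a : M true) (b : M false) : Set (Word M) :=
  {w | w.toList.take 2 = [⟨false, b⟩, ⟨true, a⟩]}

lemma Xs_nonempty {a : M true} {b : M false} (ha : a ≠ 1) (hb : b ≠ 1) :
    (Xs a b).Nonempty := by
  refine ⟨⟨[⟨true, a⟩, ⟨false, b⟩], ?_, ?_⟩, ?_⟩
  · rintro l hl
    simp only [List.mem_cons, List.mem_singleton] at hl
    rcases hl with rfl | rfl | h
    · exact ha
    · exact hb
    · simp at h
  · simp
  · simp [Xs]

lemma empty_not_mem_Xs {a : M true} {b : M false} : Word.empty ∉ Xs a b := by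
  simp [Xs, Word.empty]

lemma empty_not_mem_Ys {a : M true} {b : M false} : Word.empty ∉ Ys a b := by
  simp [Ys, Word.empty]

lemma Xs_disjoint_Ys {a a' : M true} {b b' : M false} :
    Disjoint (Xs a b) (Ys a' b') := by
  rw [Set.disjoint_left]
  intro w hw hw'
  simp only [Xs, Set.mem_setOf_eq] at hw
  simp only [Ys, Set.mem_setOf_eq] at hw'
  rw [hw] at hw'
  simp at hw'

variable [∀ i, DecidableEq (M i)]

lemma smul_mem_Xs {a : M true} {b : M false} (ha : a ≠ 1) (hb : b ≠ 1)
    (w : Word M) (hw : w ∉ Ys a b) :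
    (CoprodI.of a * CoprodI.of b * (CoprodI.of a)⁻¹ * (CoprodI.of b)⁻¹) • w ∈ Xs a b := by
  have hsm : (CoprodI.of a * CoprodI.of b * (CoprodI.of a)⁻¹ * (CoprodI.of b)⁻¹) • w
      = CoprodI.of a • (CoprodI.of b • (CoprodI.of a⁻¹ • (CoprodI.of b⁻¹ • w))) := by
    rw [map_inv, map_inv, mul_smul, mul_smul, mul_smul]
  rw [hsm]
  have key : (CoprodI.of a⁻¹ • (CoprodI.of b⁻¹ • w)).fstIdx ≠ some false := by
    rcases hL : w.toList with _ | ⟨⟨i, x⟩, t⟩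
    · have h1 : (CoprodI.of b⁻¹ • w).toList = [⟨false, b⁻¹⟩] := by
        rw [toList_of_smul (inv_ne_one.mpr hb) w (by simp only [Word.fstIdx, hL]; simp), hL]
      have h2 : (CoprodI.of a⁻¹ • (CoprodI.of b⁻¹ • w)).toList
          = ⟨true, a⁻¹⟩ :: [⟨false, b⁻¹⟩] :=
        (toList_of_smul (inv_ne_one.mpr ha) _ (by simp only [Word.fstIdx, h1]; simp)).trans (by rw [h1])
      simp only [Word.fstIdx, h2]; simp
    · cases i with
      | true =>
        have h1 : (CoprodI.of b⁻¹ • w).toList = ⟨false, b⁻¹⟩ :: w.toList :=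
          toList_of_smul (inv_ne_one.mpr hb) w (by simp only [Word.fstIdx, hL]; simp)
        have h2 := toList_of_smul (M := M) (inv_ne_one.mpr ha) (CoprodI.of b⁻¹ • w)
          (by simp only [Word.fstIdx, h1]; simp)
        simp only [Word.fstIdx, h2]; simp
      | false =>
        by_cases hbx : b⁻¹ * x = 1
        · have h1 : (CoprodI.of b⁻¹ • w).toList = t := toList_of_smul_cancel w hL hbx
          rcases hT : t with _ | ⟨⟨j, y⟩, t₂⟩
          · have h2 : (CoprodI.of a⁻¹ • (CoprodI.of b⁻¹ • w)).toList = [⟨true, a⁻¹⟩] := by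
              rw [toList_of_smul (inv_ne_one.mpr ha) _ (by simp only [Word.fstIdx, h1, hT]; simp), h1, hT]
            simp only [Word.fstIdx, h2]; simp
          · cases j with
            | false =>
              exfalso
              have hc := w.chain_ne
              rw [hL, hT] at hc
              exact (List.isChain_cons_cons.mp hc).1 rfl
            | true =>
              by_cases hay : a⁻¹ * y = 1
              · exfalso
                apply hw
                have hxb : x = b := by
                  have := inv_mul_eq_one.mp hbx; exact this.symm
                have hya : y = a := by
                  have := inv_mul_eq_one.mp hay; exact this.symm
                subst hxb; subst hya
                simp [Ys, hL, hT]
              · have h2 : (CoprodI.of a⁻¹ • (CoprodI.of b⁻¹ • w)).toList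
                    = ⟨true, a⁻¹ * y⟩ :: t₂ := by
                  refine toList_of_smul_merge _ ?_ hay
                  rw [h1, hT]
                simp only [Word.fstIdx, h2]; simp
        · have h1 : (CoprodI.of b⁻¹ • w).toList = ⟨false, b⁻¹ * x⟩ :: t :=
            toList_of_smul_merge w hL hbx
          have h2 := toList_of_smul (M := M) (inv_ne_one.mpr ha) (CoprodI.of b⁻¹ • w)
            (by simp only [Word.fstIdx, h1]; simp)
          simp only [Word.fstIdx, h2]; simp
  have h3 : (CoprodI.of b • (CoprodI.of a⁻¹ • (CoprodI.of b⁻¹ • w))).toList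
      = ⟨false, b⟩ :: (CoprodI.of a⁻¹ • (CoprodI.of b⁻¹ • w)).toList :=
    toList_of_smul hb _ key
  have h4 : (CoprodI.of a • (CoprodI.of b • (CoprodI.of a⁻¹ • (CoprodI.of b⁻¹ • w)))).toList
      = ⟨true, a⟩ :: ⟨false, b⟩ :: (CoprodI.of a⁻¹ • (CoprodI.of b⁻¹ • w)).toList :=
    (toList_of_smul ha _ (by simp only [Word.fstIdx, h3]; simp)).trans (by rw [h3])
  show _ ∈ Xs a b
  simp only [Xs, Set.mem_setOf_eq, h4]
  rfl

lemma smul_mem_Ys {a : M true} {b : M false} (ha : a ≠ 1) (hb : b ≠ 1)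
    (w : Word M) (hw : w ∉ Xs a b) :
    (CoprodI.of b * CoprodI.of a * (CoprodI.of b)⁻¹ * (CoprodI.of a)⁻¹) • w ∈ Ys a b := by
  have hsm : (CoprodI.of b * CoprodI.of a * (CoprodI.of b)⁻¹ * (CoprodI.of a)⁻¹) • w
      = CoprodI.of b • (CoprodI.of a • (CoprodI.of b⁻¹ • (CoprodI.of a⁻¹ • w))) := by
    rw [map_inv, map_inv, mul_smul, mul_smul, mul_smul]
  rw [hsm]
  have key : (CoprodI.of b⁻¹ • (CoprodI.of a⁻¹ • w)).fstIdx ≠ some true := by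
    rcases hL : w.toList with _ | ⟨⟨i, x⟩, t⟩
    · have h1 : (CoprodI.of a⁻¹ • w).toList = [⟨true, a⁻¹⟩] := by
        rw [toList_of_smul (inv_ne_one.mpr ha) w (by simp only [Word.fstIdx, hL]; simp), hL]
      have h2 : (CoprodI.of b⁻¹ • (CoprodI.of a⁻¹ • w)).toList
          = ⟨false, b⁻¹⟩ :: [⟨true, a⁻¹⟩] :=
        (toList_of_smul (inv_ne_one.mpr hb) _ (by simp only [Word.fstIdx, h1]; simp)).trans (by rw [h1])
      simp only [Word.fstIdx, h2]; simp
    · cases i with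
      | false =>
        have h1 : (CoprodI.of a⁻¹ • w).toList = ⟨true, a⁻¹⟩ :: w.toList :=
          toList_of_smul (inv_ne_one.mpr ha) w (by simp only [Word.fstIdx, hL]; simp)
        have h2 := toList_of_smul (M := M) (inv_ne_one.mpr hb) (CoprodI.of a⁻¹ • w)
          (by simp only [Word.fstIdx, h1]; simp)
        simp only [Word.fstIdx, h2]; simp
      | true =>
        by_cases hax : a⁻¹ * x = 1
        · have h1 : (CoprodI.of a⁻¹ • w).toList = t := toList_of_smul_cancel w hL hax
          rcases hT : t with _ | ⟨⟨j, y⟩, t₂⟩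
          · have h2 : (CoprodI.of b⁻¹ • (CoprodI.of a⁻¹ • w)).toList = [⟨false, b⁻¹⟩] := by
              rw [toList_of_smul (inv_ne_one.mpr hb) _ (by simp only [Word.fstIdx, h1, hT]; simp), h1, hT]
            simp only [Word.fstIdx, h2]; simp
          · cases j with
            | true =>
              exfalso
              have hc := w.chain_ne
              rw [hL, hT] at hc
              exact (List.isChain_cons_cons.mp hc).1 rfl
            | false =>
              by_cases hby : b⁻¹ * y = 1
              · exfalso
                apply hw
                have hxa : x = a := by
                  have := inv_mul_eq_one.mp hax; exact this.symm
                have hyb : y = b := by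
                  have := inv_mul_eq_one.mp hby; exact this.symm
                subst hxa; subst hyb
                simp [Xs, hL, hT]
              · have h2 : (CoprodI.of b⁻¹ • (CoprodI.of a⁻¹ • w)).toList
                    = ⟨false, b⁻¹ * y⟩ :: t₂ := by
                  refine toList_of_smul_merge _ ?_ hby
                  rw [h1, hT]
                simp only [Word.fstIdx, h2]; simp
        · have h1 : (CoprodI.of a⁻¹ • w).toList = ⟨true, a⁻¹ * x⟩ :: t :=
            toList_of_smul_merge w hL hax
          have h2 := toList_of_smul (M := M) (inv_ne_one.mpr hb) (CoprodI.of a⁻¹ • w)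
            (by simp only [Word.fstIdx, h1]; simp)
          simp only [Word.fstIdx, h2]; simp
  have h3 : (CoprodI.of a • (CoprodI.of b⁻¹ • (CoprodI.of a⁻¹ • w))).toList
      = ⟨true, a⟩ :: (CoprodI.of b⁻¹ • (CoprodI.of a⁻¹ • w)).toList :=
    toList_of_smul ha _ key
  have h4 : (CoprodI.of b • (CoprodI.of a • (CoprodI.of b⁻¹ • (CoprodI.of a⁻¹ • w)))).toList
      = ⟨false, b⟩ :: ⟨true, a⟩ :: (CoprodI.of b⁻¹ • (CoprodI.of a⁻¹ • w)).toList :=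
    (toList_of_smul hb _ (by simp only [Word.fstIdx, h3]; simp)).trans (by rw [h3])
  show _ ∈ Ys a b
  simp only [Ys, Set.mem_setOf_eq, h4]
  rfl

end Words

section Kernel

variable (M : Bool → Type u) [∀ i, Group (M i)]

/-- The canonical projection to the direct product. -/
def πhom : CoprodI M →* (M true) × (M false) :=
  CoprodI.lift (fun b => Bool.rec (motive := fun b => M b →* (M true) × (M false))
    (MonoidHom.inr (M true) (M false)) (MonoidHom.inl (M true) (M false)) b)

variable {M}

/-- Basic commutators. -/
def cgen (a : M true) (b : M false) : CoprodI M :=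
  CoprodI.of a * CoprodI.of b * (CoprodI.of a)⁻¹ * (CoprodI.of b)⁻¹

variable (M)

/-- The index type for the free basis of the kernel. -/
abbrev PairsNe : Type u := {p : (M true) × (M false) // p.1 ≠ 1 ∧ p.2 ≠ 1}

/-- The homomorphism from the free group on nontrivial pairs. -/
def liftComm : FreeGroup (PairsNe M) →* CoprodI M :=
  FreeGroup.lift (fun p : PairsNe M => cgen p.val.1 p.val.2)

/-- The Cartesian subgroup: image of all basic commutators. -/
def Ngrp : Subgroup (CoprodI M) := (liftComm M).range

variable {M}

lemma cgen_mem (a : M true) (b : M false) : cgen a b ∈ Ngrp M := by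
  by_cases ha : a = 1
  · have : cgen a b = 1 := by simp [cgen, ha]
    rw [this]; exact one_mem _
  by_cases hb : b = 1
  · have : cgen a b = 1 := by simp [cgen, hb]
    rw [this]; exact one_mem _
  exact ⟨FreeGroup.of ⟨(a, b), ha, hb⟩, FreeGroup.lift_apply_of⟩

lemma conj_mem_ngrp (g x : CoprodI M) (hx : x ∈ Ngrp M) : g * x * g⁻¹ ∈ Ngrp M := by
  induction g using CoprodI.induction_on generalizing x with
  | one => simpa using hx
  | of i m =>
    have hx' : x ∈ Subgroup.closure (Set.range fun p : PairsNe M => cgen p.val.1 p.val.2) := by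
      rw [← FreeGroup.range_lift_eq_closure]; exact hx
    refine Subgroup.closure_induction ?_ ?_ ?_ ?_ hx'
    · rintro _ ⟨p, rfl⟩
      obtain ⟨⟨a, b⟩, ha, hb⟩ := p
      cases i with
      | true =>
        have hid : CoprodI.of m * cgen a b * (CoprodI.of m)⁻¹
            = cgen (m * a) b * (cgen m b)⁻¹ := by
          simp only [cgen, map_mul]
          group
        rw [hid]
        exact mul_mem (cgen_mem _ _) (inv_mem (cgen_mem _ _))
      | false =>
        have hid : CoprodI.of m * cgen a b * (CoprodI.of m)⁻¹
            = (cgen a m)⁻¹ * cgen a (m * b) := by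
          simp only [cgen, map_mul]
          group
        rw [hid]
        exact mul_mem (inv_mem (cgen_mem _ _)) (cgen_mem _ _)
    · simpa using one_mem (Ngrp M)
    · intro x y _ _ hx hy
      have : CoprodI.of m * (x * y) * (CoprodI.of m)⁻¹
          = (CoprodI.of m * x * (CoprodI.of m)⁻¹) * (CoprodI.of m * y * (CoprodI.of m)⁻¹) := by
        group
      rw [this]; exact mul_mem hx hy
    · intro x _ hx
      have : CoprodI.of m * x⁻¹ * (CoprodI.of m)⁻¹
          = (CoprodI.of m * x * (CoprodI.of m)⁻¹)⁻¹ := by group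
      rw [this]; exact inv_mem hx
  | mul g g' ihg ihg' =>
    have h1 := ihg' x hx
    have h2 := ihg _ h1
    have : g * g' * x * (g * g')⁻¹ = g * (g' * x * g'⁻¹) * g⁻¹ := by group
    rw [this]
    exact h2

lemma ngrp_normal : (Ngrp M).Normal := ⟨fun x hx g => conj_mem_ngrp g x hx⟩

lemma ker_le_ngrp : (πhom M).ker ≤ Ngrp M := by
  haveI := ngrp_normal (M := M)
  let u : M true →* CoprodI M ⧸ Ngrp M :=
    (QuotientGroup.mk' (Ngrp M)).comp (CoprodI.of (i := true))
  let v : M false →* CoprodI M ⧸ Ngrp M :=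
    (QuotientGroup.mk' (Ngrp M)).comp (CoprodI.of (i := false))
  have hcomm : ∀ x y, Commute (u x) (v y) := by
    intro x y
    show QuotientGroup.mk' (Ngrp M) (CoprodI.of x) * QuotientGroup.mk' (Ngrp M) (CoprodI.of y)
      = QuotientGroup.mk' (Ngrp M) (CoprodI.of y) * QuotientGroup.mk' (Ngrp M) (CoprodI.of x)
    rw [← map_mul, ← map_mul]
    refine QuotientGroup.eq.mpr ?_
    have hid : (CoprodI.of x * CoprodI.of y)⁻¹ * (CoprodI.of y * CoprodI.of x)
        = (cgen x⁻¹ y⁻¹)⁻¹ := by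
      simp only [cgen, map_inv]
      group
    rw [hid]
    exact inv_mem (cgen_mem _ _)
  let h : (M true) × (M false) →* CoprodI M ⧸ Ngrp M := MonoidHom.noncommCoprod u v hcomm
  have hfac : h.comp (πhom M) = QuotientGroup.mk' (Ngrp M) := by
    refine CoprodI.ext_hom _ _ (fun i => ?_)
    cases i <;> ext x <;>
      simp [h, u, v, πhom, MonoidHom.noncommCoprod_apply]
  intro x hx
  have hx1 : πhom M x = 1 := hx
  have : QuotientGroup.mk' (Ngrp M) x = 1 := by
    rw [← hfac]
    simp [hx1]
  rwa [← QuotientGroup.ker_mk' (Ngrp M), MonoidHom.mem_ker]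

variable [∀ i, DecidableEq (M i)]

lemma cgen_eq_inv (a : M true) (b : M false) :
    (cgen a b)⁻¹
      = CoprodI.of b * CoprodI.of a * (CoprodI.of b)⁻¹ * (CoprodI.of a)⁻¹ := by
  simp only [cgen]
  group

lemma cgen_zpow_smul_empty {a : M true} {b : M false} (ha : a ≠ 1) (hb : b ≠ 1)
    {k : ℤ} (hk : k ≠ 0) :
    (cgen a b) ^ k • (Word.empty : Word M) ∈ Xs a b ∪ Ys a b := by
  rcases lt_or_gt_of_ne hk with hneg | hpos
  · right
    have hgen : ∀ n : ℤ, 1 ≤ n → (cgen a b) ^ (-n) • (Word.empty : Word M) ∈ Ys a b := by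
      intro n hn
      refine Int.le_induction (motive := fun n _ => (cgen a b) ^ (-n) • (Word.empty : Word M) ∈ Ys a b)
        ?_ ?_ n hn
      · rw [zpow_neg, zpow_one, cgen_eq_inv]
        exact smul_mem_Ys ha hb _ empty_not_mem_Xs
      · intro n _ ih
        try dsimp only
        try dsimp only at ih
        have hstep : (cgen a b) ^ (-(n + 1)) • (Word.empty : Word M)
            = (cgen a b)⁻¹ • ((cgen a b) ^ (-n) • (Word.empty : Word M)) := by
          have hexp : (-(n + 1) : ℤ) = -1 + -n := by ring
          rw [hexp, zpow_add, zpow_neg_one, mul_smul]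
        rw [hstep, cgen_eq_inv]
        refine smul_mem_Ys ha hb _ ?_
        intro hmem
        exact (Set.disjoint_left.mp Xs_disjoint_Ys hmem) ih
    have := hgen (-k) (by omega)
    simpa using this
  · left
    have hgen : ∀ n : ℤ, 1 ≤ n → (cgen a b) ^ n • (Word.empty : Word M) ∈ Xs a b := by
      intro n hn
      refine Int.le_induction (motive := fun n _ => (cgen a b) ^ n • (Word.empty : Word M) ∈ Xs a b)
        ?_ ?_ n hn
      · rw [zpow_one]
        exact smul_mem_Xs ha hb _ empty_not_mem_Ys
      · intro n _ ih
        try dsimp only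
        try dsimp only at ih
        have hstep : (cgen a b) ^ (n + 1) • (Word.empty : Word M)
            = (cgen a b) • ((cgen a b) ^ n • (Word.empty : Word M)) := by
          have hexp : (n + 1 : ℤ) = 1 + n := by ring
          rw [hexp, zpow_add, zpow_one, mul_smul]
        rw [hstep]
        show (cgen a b) • _ ∈ Xs a b
        refine smul_mem_Xs ha hb _ ?_
        intro hmem
        exact (Set.disjoint_left.mp Xs_disjoint_Ys ih) hmem
    exact hgen k hpos

lemma liftComm_injective (hA : Nontrivial (M true)) (hB : Nontrivial (M false)) :
    Function.Injective (liftComm M) := by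
  obtain ⟨a0, ha0⟩ := exists_ne (1 : M true)
  obtain ⟨b0, hb0⟩ := exists_ne (1 : M false)
  rcases subsingleton_or_nontrivial (PairsNe M) with hsub | hnontriv
  · -- degenerate case : a single basic commutator, of infinite order
    haveI : Unique (PairsNe M) := uniqueOfSubsingleton ⟨(a0, b0), ha0, hb0⟩
    refine (injective_iff_map_eq_one _).mpr (fun x hx => ?_)
    set p0 : PairsNe M := default
    have hrep := freegroup_unique_rep x
    set k := Multiplicative.toAdd ((FreeGroup.lift fun _ : PairsNe M =>
      Multiplicative.ofAdd (1 : ℤ)) x) with hkdef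
    by_cases hk : k = 0
    · rw [hrep, hk, zpow_zero]
    · exfalso
      have hpow : (cgen p0.val.1 p0.val.2) ^ k = 1 := by
        have h2 : liftComm M (FreeGroup.of p0 ^ k) = 1 := by rw [← hrep]; exact hx
        simp only [liftComm] at h2
        rwa [map_zpow, FreeGroup.lift_apply_of] at h2
      have hmem := cgen_zpow_smul_empty p0.prop.1 p0.prop.2 hk (M := M)
      rw [hpow, one_smul] at hmem
      rcases hmem with hmem | hmem
      · exact empty_not_mem_Xs hmem
      · exact empty_not_mem_Ys hmem
  · -- generic case : ping-pong
    refine FreeGroup.injective_lift_of_ping_pong _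
      (fun p : PairsNe M => Xs p.val.1 p.val.2) (fun p : PairsNe M => Ys p.val.1 p.val.2)
      ?_ ?_ ?_ ?_ ?_ ?_
    · exact fun p => Xs_nonempty p.prop.1 p.prop.2
    · intro p q hpq
      rw [Function.onFun, Set.disjoint_left]
      intro w hw hw'
      simp only [Xs, Set.mem_setOf_eq] at hw hw'
      rw [hw] at hw'
      apply hpq
      rcases p with ⟨⟨pa, pb⟩, hp⟩
      rcases q with ⟨⟨qa, qb⟩, hq⟩
      simp only [List.cons.injEq, and_true] at hw'
      have e1 : pa = qa := by simpa using hw'.1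
      have e2 : pb = qb := by simpa using hw'.2
      subst e1; subst e2; rfl
    · intro p q hpq
      rw [Function.onFun, Set.disjoint_left]
      intro w hw hw'
      simp only [Ys, Set.mem_setOf_eq] at hw hw'
      rw [hw] at hw'
      apply hpq
      rcases p with ⟨⟨pa, pb⟩, hp⟩
      rcases q with ⟨⟨qa, qb⟩, hq⟩
      simp only [List.cons.injEq, and_true] at hw'
      have e2 : pb = qb := by simpa using hw'.1
      have e1 : pa = qa := by simpa using hw'.2
      subst e1; subst e2; rfl
    · intro p q
      exact Xs_disjoint_Ys
    · rintro p _ ⟨w, hw, rfl⟩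
      exact smul_mem_Xs p.prop.1 p.prop.2 w hw
    · rintro p _ ⟨w, hw, rfl⟩
      rw [Pi.inv_apply]
      show (cgen p.val.1 p.val.2)⁻¹ • w ∈ _
      rw [cgen_eq_inv]
      exact smul_mem_Ys p.prop.1 p.prop.2 w hw

lemma ngrp_isFreeGroup (hA : Nontrivial (M true)) (hB : Nontrivial (M false)) :
    IsFreeGroup (Ngrp M) :=
  IsFreeGroup.ofMulEquiv (MonoidHom.ofInjective (liftComm_injective hA hB))

end Kernel

section Assemble

lemma locallyIndicable_coprodI (M : Bool → Type u) [∀ i, Group (M i)]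
    (h1 : LocallyIndicable (M true)) (h0 : LocallyIndicable (M false)) :
    LocallyIndicable (CoprodI M) := by
  classical
  intro K hKbot hKfg
  by_cases hm1 : K.map ((MonoidHom.fst _ _).comp (πhom M)) = ⊥
  swap
  · obtain ⟨f, hf⟩ := h1 _ hm1 (aux_fg_map hKfg _)
    exact ⟨f.comp (MonoidHom.subgroupMap _ K), hf.comp (MonoidHom.subgroupMap_surjective _ K)⟩
  by_cases hm0 : K.map ((MonoidHom.snd _ _).comp (πhom M)) = ⊥
  swap
  · obtain ⟨f, hf⟩ := h0 _ hm0 (aux_fg_map hKfg _)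
    exact ⟨f.comp (MonoidHom.subgroupMap _ K), hf.comp (MonoidHom.subgroupMap_surjective _ K)⟩
  have hker : K ≤ (πhom M).ker := by
    intro x hx
    have hx1 : ((MonoidHom.fst _ _).comp (πhom M)) x = 1 :=
      ((Subgroup.map_eq_bot_iff K).mp hm1) hx
    have hx0 : ((MonoidHom.snd _ _).comp (πhom M)) x = 1 :=
      ((Subgroup.map_eq_bot_iff K).mp hm0) hx
    show πhom M x = 1
    have : πhom M x = (((MonoidHom.fst _ _).comp (πhom M)) x,
        ((MonoidHom.snd _ _).comp (πhom M)) x) := rfl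
    rw [this, hx1, hx0]
    rfl
  -- both factors must be nontrivial
  rcases subsingleton_or_nontrivial (M true) with hs | hnt1
  · exfalso
    apply hKbot
    have hcollapse : (CoprodI.of (i := false)).comp
        ((MonoidHom.snd _ _).comp (πhom M)) = MonoidHom.id (CoprodI M) := by
      refine CoprodI.ext_hom _ _ (fun i => ?_)
      cases i
      · ext x
        simp [πhom]
      · ext x
        have hx1 : x = 1 := Subsingleton.elim x 1
        subst hx1
        simp [πhom]
    rw [Subgroup.eq_bot_iff_forall]
    intro x hx
    have hxk : πhom M x = 1 := hker hx
    calc x = (CoprodI.of (i := false)).comp ((MonoidHom.snd _ _).comp (πhom M)) x := by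
            rw [hcollapse]; rfl
      _ = 1 := by simp [hxk]
  rcases subsingleton_or_nontrivial (M false) with hs | hnt0
  · exfalso
    apply hKbot
    have hcollapse : (CoprodI.of (i := true)).comp
        ((MonoidHom.fst _ _).comp (πhom M)) = MonoidHom.id (CoprodI M) := by
      refine CoprodI.ext_hom _ _ (fun i => ?_)
      cases i
      · ext x
        have hx1 : x = 1 := Subsingleton.elim x 1
        subst hx1
        simp [πhom]
      · ext x
        simp [πhom]
    rw [Subgroup.eq_bot_iff_forall]
    intro x hx
    have hxk : πhom M x = 1 := hker hx
    calc x = (CoprodI.of (i := true)).comp ((MonoidHom.fst _ _).comp (πhom M)) x := by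
            rw [hcollapse]; rfl
      _ = 1 := by simp [hxk]
  -- hard case : K lies in the free Cartesian subgroup
  have hKN : K ≤ Ngrp M := le_trans hker ker_le_ngrp
  haveI : IsFreeGroup (Ngrp M) := ngrp_isFreeGroup hnt1 hnt0
  haveI : IsFreeGroup (K.subgroupOf (Ngrp M)) := inferInstance
  have e := Subgroup.subgroupOfEquivOfLe hKN
  haveI : Nontrivial K := (Subgroup.nontrivial_iff_ne_bot K).mpr hKbot
  haveI : Nontrivial (K.subgroupOf (Ngrp M)) := e.toEquiv.nontrivial
  obtain ⟨f, hf⟩ := exists_surj_of_free (K.subgroupOf (Ngrp M))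
  exact ⟨f.comp e.symm.toMonoidHom, hf.comp e.symm.surjective⟩

end Assemble

end LocIndAux

section Main

universe u v

variable (A : Type u) (B : Type v)

/-- The Bool-indexed family corresponding to `A` and `B`. -/
def LocIndFam : Bool → Type (max u v) := fun b => Bool.rec (ULift.{u} B) (ULift.{v} A) b

instance (b : Bool) [Group A] [Group B] : Group (LocIndFam A B b) := by
  cases b
  · exact inferInstanceAs (Group (ULift B))
  · exact inferInstanceAs (Group (ULift A))

variable [Group A] [Group B]

/-- The isomorphism between the binary coproduct and the Bool-indexed one. -/
noncomputable def locIndEquiv : Monoid.Coprod A B ≃* Monoid.CoprodI (LocIndFam A B) := by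
  refine MonoidHom.toMulEquiv
    (Monoid.Coprod.lift
      ((Monoid.CoprodI.of (M := LocIndFam A B) (i := true)).comp
        (MulEquiv.ulift.symm.toMonoidHom : A →* ULift A))
      ((Monoid.CoprodI.of (M := LocIndFam A B) (i := false)).comp
        (MulEquiv.ulift.symm.toMonoidHom : B →* ULift B)))
    (Monoid.CoprodI.lift (fun b => Bool.rec
      (motive := fun b => LocIndFam A B b →* Monoid.Coprod A B)
      (Monoid.Coprod.inr.comp (MulEquiv.ulift.toMonoidHom : ULift B →* B))
      (Monoid.Coprod.inl.comp (MulEquiv.ulift.toMonoidHom : ULift A →* A)) b))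
    ?_ ?_
  · refine Monoid.Coprod.hom_ext ?_ ?_ <;> ext x <;> rfl
  · refine Monoid.CoprodI.ext_hom _ _ (fun i => ?_)
    cases i <;> ext x <;> rfl

end Main

/-- The free product of two locally indicable groups is locally indicable. -/
theorem locallyIndicable_coprod
    (A B : Type*) [Group A] [Group B]
    (hA : LocallyIndicable A) (hB : LocallyIndicable B) :
    LocallyIndicable (Monoid.Coprod A B) := by
  have hA' : LocallyIndicable (LocIndFam A B true) :=
    LocIndAux.locallyIndicable_of_mulEquiv (MulEquiv.ulift.symm :
      A ≃* ULift A) hA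
  have hB' : LocallyIndicable (LocIndFam A B false) :=
    LocIndAux.locallyIndicable_of_mulEquiv (MulEquiv.ulift.symm :
      B ≃* ULift B) hB
  have hCI : LocallyIndicable (Monoid.CoprodI (LocIndFam A B)) :=
    LocIndAux.locallyIndicable_coprodI _ hA' hB'
  exact LocIndAux.locallyIndicable_of_mulEquiv (locIndEquiv A B).symm hCI
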